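/- Let E be a finite family of distinct nonempty subsets of {1,…,n} with weights q_α, q_β, q_γ : E → ℝ, and let Q be the associated edge-length spectrum. Then for all C, D ⊆ {1,…,n}: (H_n Q H_n)_{C,D} = −2·( Σ_{S ∈ Π_C} q_α(S) + Σ_{S ∈ Π_D} q_β(S) + Σ_{S ∈ Π_C Δ Π_D} q_γ(S) ), where Π_C = {S ∈ E : |S∩C| odd}, Π_D = {S ∈ E : |S∩D| odd}, and Π_C Δ Π_D = {S ∈ E : |S∩C| + |S∩D| is odd}. -/
import Mathlib


/-- The `2ⁿ × 2ⁿ` Hadamard matrix indexed by subsets of `{1,…,n}`,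
with entry `(A, B) ↦ (−1)^{|A ∩ B|}`. -/
def Hmat (n : ℕ) : Matrix (Finset (Fin n)) (Finset (Fin n)) ℝ :=
  Matrix.of fun A B => (-1 : ℝ) ^ (A ∩ B).card

/-- The edge-length spectrum associated to a family `E` of subsets of `{1,…,n}`
with weights `qa, qb, qc` (for substitution types α, β, γ). -/
def Qspec {n : ℕ} (E : Finset (Finset (Fin n))) (qa qb qc : Finset (Fin n) → ℝ) :
    Matrix (Finset (Fin n)) (Finset (Fin n)) ℝ :=
  Matrix.of fun A B =>
    if A = ∅ ∧ B = ∅ then -∑ S ∈ E, (qa S + qb S + qc S)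
    else if B = ∅ ∧ A ∈ E then qa A
    else if A = ∅ ∧ B ∈ E then qb B
    else if A = B ∧ A ∈ E then qc A
    else 0

lemma conj_std {n : ℕ} (i j C D : Finset (Fin n)) (v : ℝ) :
    (Hmat n * Matrix.single i j v * Hmat n) C D =
      (-1 : ℝ) ^ (C ∩ i).card * v * (-1 : ℝ) ^ (j ∩ D).card := by
  simp [Matrix.mul_apply, Matrix.single, Hmat, ite_and, mul_ite, ite_mul,
    Finset.sum_ite_eq, Finset.sum_ite_eq', Finset.mul_sum, Finset.sum_mul]

lemma Qspec_decomp {n : ℕ} (E : Finset (Finset (Fin n))) (hE : ∅ ∉ E)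
    (qa qb qc : Finset (Fin n) → ℝ) :
    Qspec E qa qb qc =
      Matrix.single ∅ ∅ (-∑ S ∈ E, (qa S + qb S + qc S)) +
      ∑ S ∈ E, (Matrix.single S ∅ (qa S) +
        Matrix.single ∅ S (qb S) + Matrix.single S S (qc S)) := by
  ext A B
  have hcong : ∀ S ∈ E,
      ((Matrix.single S ∅ (qa S) + Matrix.single ∅ S (qb S) +
        Matrix.single S S (qc S)) : Matrix (Finset (Fin n)) (Finset (Fin n)) ℝ) A B =
      (if S = A ∧ B = ∅ then qa S else 0) + (if A = ∅ ∧ S = B then qb S else 0) +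
        (if S = A ∧ S = B then qc S else 0) := by
    intro S hS
    simp only [Matrix.add_apply, Matrix.single, Matrix.of_apply]
    congr 2
    · congr 1; exact propext ⟨fun ⟨h1, h2⟩ => ⟨h1, h2.symm⟩, fun ⟨h1, h2⟩ => ⟨h1, h2.symm⟩⟩
    · congr 1; exact propext ⟨fun ⟨h1, h2⟩ => ⟨h1.symm, h2⟩, fun ⟨h1, h2⟩ => ⟨h1.symm, h2⟩⟩
  have e1 : ∑ S ∈ E, (if S = A ∧ B = ∅ then qa S else 0) =
      if B = ∅ ∧ A ∈ E then qa A else 0 := by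
    by_cases hB : B = ∅
    · simp only [hB, and_true, Finset.sum_ite_eq' E A qa, true_and]
    · simp [hB]
  have e2 : ∑ S ∈ E, (if A = ∅ ∧ S = B then qb S else 0) =
      if A = ∅ ∧ B ∈ E then qb B else 0 := by
    by_cases hA : A = ∅
    · simp only [hA, true_and, Finset.sum_ite_eq' E B qb]
    · simp [hA]
  have e3 : ∑ S ∈ E, (if S = A ∧ S = B then qc S else 0) =
      if A = B ∧ A ∈ E then qc A else 0 := by
    by_cases hAB : A = B
    · subst hAB
      simp [Finset.sum_ite_eq' E A qc]
    · rw [Finset.sum_eq_zero, if_neg (fun h => hAB h.1)]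
      intro S hS
      rw [if_neg]
      rintro ⟨h1, h2⟩; exact hAB (h1 ▸ h2)
  have esum : ∑ S ∈ E, ((if S = A ∧ B = ∅ then qa S else 0) +
      (if A = ∅ ∧ S = B then qb S else 0) + (if S = A ∧ S = B then qc S else 0)) =
      (if B = ∅ ∧ A ∈ E then qa A else 0) + (if A = ∅ ∧ B ∈ E then qb B else 0) +
        (if A = B ∧ A ∈ E then qc A else 0) := by
    rw [Finset.sum_add_distrib, Finset.sum_add_distrib, e1, e2, e3]
  rw [Matrix.add_apply, Matrix.sum_apply, Finset.sum_congr rfl hcong, esum]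
  have hA' : ((∅ : Finset (Fin n)) = A ∧ (∅ : Finset (Fin n)) = B) ↔ (A = ∅ ∧ B = ∅) := by
    constructor <;> rintro ⟨h1, h2⟩ <;> exact ⟨h1.symm, h2.symm⟩
  simp only [Matrix.single, Matrix.of_apply, Qspec, hA']
  by_cases hA : A = ∅ <;> by_cases hB : B = ∅ <;>
    simp_all [hE]

theorem stmt12 {n : ℕ} (E : Finset (Finset (Fin n))) (hE : ∅ ∉ E)
    (qa qb qc : Finset (Fin n) → ℝ) (C D : Finset (Fin n)) :
    (Hmat n * Qspec E qa qb qc * Hmat n) C D =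
      -2 * ((∑ S ∈ E.filter (fun S => Odd (S ∩ C).card), qa S) +
        (∑ S ∈ E.filter (fun S => Odd (S ∩ D).card), qb S) +
        (∑ S ∈ E.filter (fun S => Odd ((S ∩ C).card + (S ∩ D).card)), qc S)) := by
  rw [Qspec_decomp E hE qa qb qc]
  simp only [Matrix.mul_add, Matrix.add_mul, Matrix.mul_sum, Matrix.sum_mul,
    Matrix.add_apply, Matrix.sum_apply, conj_std]
  simp only [Finset.inter_empty, Finset.empty_inter, Finset.card_empty, pow_zero,
    mul_one, one_mul]
  rw [Finset.sum_filter, Finset.sum_filter, Finset.sum_filter]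
  have key : ∀ S : Finset (Fin n),
      ((-1 : ℝ) ^ (C ∩ S).card * qa S + qb S * (-1 : ℝ) ^ (S ∩ D).card +
        (-1 : ℝ) ^ (C ∩ S).card * qc S * (-1 : ℝ) ^ (S ∩ D).card)
        - (qa S + qb S + qc S) =
      -2 * ((if Odd (S ∩ C).card then qa S else 0) + (if Odd (S ∩ D).card then qb S else 0) +
        (if Odd ((S ∩ C).card + (S ∩ D).card) then qc S else 0)) := by
    intro S
    rw [Finset.inter_comm C S]
    rcases Nat.even_or_odd (S ∩ C).card with ha | ha <;>
      rcases Nat.even_or_odd (S ∩ D).card with hb | hb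
    · simp [ha.neg_one_pow, hb.neg_one_pow, Nat.odd_iff, Nat.even_iff.mp ha,
        Nat.even_iff.mp hb, Nat.add_mod]; try ring
    · simp [ha.neg_one_pow, hb.neg_one_pow, Nat.odd_iff, Nat.even_iff.mp ha,
        Nat.odd_iff.mp hb, Nat.add_mod]; try ring
    · simp [ha.neg_one_pow, hb.neg_one_pow, Nat.odd_iff, Nat.odd_iff.mp ha,
        Nat.even_iff.mp hb, Nat.add_mod]; try ring
    · simp [ha.neg_one_pow, hb.neg_one_pow, Nat.odd_iff, Nat.odd_iff.mp ha,
        Nat.odd_iff.mp hb, Nat.add_mod]; try ring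
  rw [neg_add_eq_sub, ← Finset.sum_sub_distrib]
  rw [Finset.sum_congr rfl (fun S _ => key S), ← Finset.mul_sum,
    Finset.sum_add_distrib, Finset.sum_add_distrib]
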